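/- Let ε > 0, λ = √2·ε, and L > (1/(2ε))·arctan(2). Then there exists a standing-wave profile ψ for parameters ε, L, λ that is even, strictly positive, and concentrated at the defects: ψ(L) = ψ(−L) and ψ(x) ≤ ψ(L) for all x ∈ ℝ. -/

import Mathlib

open Filter Topology Set

/-- A standing-wave profile for the double delta-well Gross–Pitaevskii equation with
parameters `ε, L, lam`: `ψ` is continuous, decays at `±∞`, has derivative `ψ'` and
satisfies `ψ'' = lam² ψ - 2 ψ³` away from `±L`, and the one-sided limits of `ψ'` at
`±L` exist and jump by `-ε ψ`. -/
def IsStandingWaveProfile (ε L lam : ℝ) (ψ ψ' : ℝ → ℝ) : Prop :=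
  Continuous ψ ∧
  Tendsto ψ atTop (𝓝 0) ∧ Tendsto ψ atBot (𝓝 0) ∧
  (∀ x : ℝ, x ≠ L → x ≠ -L →
    HasDerivAt ψ (ψ' x) x ∧
    HasDerivAt ψ' (lam ^ 2 * ψ x - 2 * ψ x ^ 3) x) ∧
  (∀ x : ℝ, x = L ∨ x = -L →
    ∃ a b : ℝ,
      Tendsto ψ' (𝓝[>] x) (𝓝 a) ∧
      Tendsto ψ' (𝓝[<] x) (𝓝 b) ∧
      a - b = -ε * ψ x)

/-- The shift `t₀ = log(1+√2)`, characterized by `cosh t₀ = √2`, `sinh t₀ = 1`. -/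
noncomputable def swT0 : ℝ := Real.log (1 + Real.sqrt 2)

lemma sw_sqrt2_pos : (0:ℝ) < Real.sqrt 2 := Real.sqrt_pos.mpr (by norm_num)

lemma sw_sqrt2_sq : Real.sqrt 2 ^ 2 = 2 := Real.sq_sqrt (by norm_num)

lemma sw_cosh_t0 : Real.cosh swT0 = Real.sqrt 2 := by
  have h1 : (0:ℝ) < 1 + Real.sqrt 2 := by positivity
  rw [swT0, Real.cosh_eq, Real.exp_log h1, Real.exp_neg, Real.exp_log h1]
  have hs := sw_sqrt2_sq
  field_simp
  nlinarith [sw_sqrt2_pos]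

lemma sw_sinh_t0 : Real.sinh swT0 = 1 := by
  have h1 : (0:ℝ) < 1 + Real.sqrt 2 := by positivity
  rw [swT0, Real.sinh_eq, Real.exp_log h1, Real.exp_neg, Real.exp_log h1]
  have hs := sw_sqrt2_sq
  field_simp
  nlinarith [sw_sqrt2_pos]

lemma sw_t0_nonneg : 0 ≤ swT0 :=
  Real.log_nonneg (by nlinarith [sw_sqrt2_pos])

/-- The wave profile. -/
noncomputable def swPsi (lam L : ℝ) (x : ℝ) : ℝ :=
  lam / Real.cosh (lam * max (|x| - L) 0 + swT0)

/-- Its derivative. -/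
noncomputable def swPsi' (lam L : ℝ) (x : ℝ) : ℝ :=
  if x ≤ -L then
    lam ^ 2 * Real.sinh (lam * (-x - L) + swT0) / Real.cosh (lam * (-x - L) + swT0) ^ 2
  else if x < L then 0
  else
    -lam ^ 2 * Real.sinh (lam * (x - L) + swT0) / Real.cosh (lam * (x - L) + swT0) ^ 2

/-- Derivative of `A / cosh (a (y - c) + t)`. -/
lemma sw_hasDerivAt_aux (A a c t x : ℝ) :
    HasDerivAt (fun y => A / Real.cosh (a * (y - c) + t))
      (-(A * a) * Real.sinh (a * (x - c) + t) / Real.cosh (a * (x - c) + t) ^ 2) x := by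
  have hu : HasDerivAt (fun y => a * (y - c) + t) a x := by
    simpa using (((hasDerivAt_id x).sub_const c).const_mul a).add_const t
  have hcosh : HasDerivAt (fun y => Real.cosh (a * (y - c) + t))
      (Real.sinh (a * (x - c) + t) * a) x :=
    (Real.hasDerivAt_cosh _).comp x hu
  have hinv := hcosh.inv (Real.cosh_pos _).ne'
  have := hinv.const_mul A
  refine this.congr_deriv ?_
  field_simp

/-- Derivative of `A sinh(u) / cosh(u)²` with `u = a (y - c) + t`. -/
lemma sw_hasDerivAt_aux2 (A a c t x : ℝ) :
    HasDerivAt (fun y => A * Real.sinh (a * (y - c) + t) / Real.cosh (a * (y - c) + t) ^ 2)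
      (A * a * (Real.cosh (a * (x - c) + t) ^ 2 - 2 * Real.sinh (a * (x - c) + t) ^ 2)
        / Real.cosh (a * (x - c) + t) ^ 3) x := by
  have hu : HasDerivAt (fun y => a * (y - c) + t) a x := by
    simpa using (((hasDerivAt_id x).sub_const c).const_mul a).add_const t
  have hsinh : HasDerivAt (fun y => A * Real.sinh (a * (y - c) + t))
      (A * (Real.cosh (a * (x - c) + t) * a)) x :=
    (((Real.hasDerivAt_sinh _).comp x hu).const_mul A)
  have hcosh : HasDerivAt (fun y => Real.cosh (a * (y - c) + t))
      (Real.sinh (a * (x - c) + t) * a) x :=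
    (Real.hasDerivAt_cosh _).comp x hu
  have hsq := hcosh.pow 2
  have hinv := hsq.inv (by positivity : Real.cosh (a * (x - c) + t) ^ 2 ≠ 0)
  have := hsinh.mul hinv
  refine this.congr_deriv ?_
  have hc : Real.cosh (a * (x - c) + t) ≠ 0 := (Real.cosh_pos _).ne'
  push_cast
  simp only [Pi.inv_apply, Pi.pow_apply]
  field_simp
  ring

/-- Decay of the profile whenever `|x| → ∞`. -/
lemma sw_tendsto_aux {lam L : ℝ} (hlam : 0 < lam) {l : Filter ℝ}
    (habs : Tendsto (fun x : ℝ => |x|) l atTop) :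
    Tendsto (swPsi lam L) l (𝓝 0) := by
  have harg : Tendsto (fun x : ℝ => lam * max (|x| - L) 0 + swT0) l atTop := by
    refine tendsto_atTop_add_const_right _ swT0 ?_
    refine Tendsto.const_mul_atTop hlam ?_
    refine tendsto_atTop_mono (fun x => le_max_left _ _) ?_
    exact tendsto_atTop_add_const_right _ (-L) habs
  have hcosh : Tendsto Real.cosh atTop atTop := by
    refine tendsto_atTop_mono (fun x => ?_) (Real.tendsto_exp_atTop.atTop_div_const two_pos)
    rw [Real.cosh_eq]
    have := (Real.exp_pos (-x)).le
    linarith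
  have : Tendsto (fun x : ℝ => (Real.cosh (lam * max (|x| - L) 0 + swT0))⁻¹) l (𝓝 0) :=
    tendsto_inv_atTop_zero.comp (hcosh.comp harg)
  have h2 := this.const_mul lam
  unfold swPsi
  simpa [div_eq_mul_inv] using h2

lemma sw_ode_id (lam C S : ℝ) (hC : C ≠ 0) (h : C ^ 2 = S ^ 2 + 1) :
    lam ^ 2 * (lam / C) - 2 * (lam / C) ^ 3 = -(lam ^ 3) * (C ^ 2 - 2 * S ^ 2) / C ^ 3 := by
  field_simp
  linear_combination (2 * lam ^ 3) * h

/-- for `lam = √2 ε` and `L > (1/(2ε)) arctan 2` there is an even,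
strictly positive standing-wave profile concentrated at the defects. -/
theorem exists_symmetric_standing_wave_concentrated_regime3 (ε L lam : ℝ)
    (hε : 0 < ε) (hlam : lam = Real.sqrt 2 * ε)
    (hL : 1 / (2 * ε) * Real.arctan 2 < L) :
    ∃ ψ ψ' : ℝ → ℝ, IsStandingWaveProfile ε L lam ψ ψ' ∧
      (∀ x : ℝ, ψ (-x) = ψ x) ∧ (∀ x : ℝ, 0 < ψ x) ∧
      ψ L = ψ (-L) ∧ (∀ x : ℝ, ψ x ≤ ψ L) := by
  have hlam0 : 0 < lam := by rw [hlam]; positivity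
  have hL0 : 0 < L := by
    have h1 : 0 < Real.arctan 2 := by
      have := Real.arctan_strictMono (show (0:ℝ) < 2 by norm_num)
      simpa [Real.arctan_zero] using this
    have h2 : 0 < 1 / (2 * ε) := by positivity
    nlinarith
  have hs2 := sw_sqrt2_pos
  have hssq := sw_sqrt2_sq
  -- pointwise values
  have hval_in : ∀ x : ℝ, |x| ≤ L → swPsi lam L x = lam / Real.sqrt 2 := by
    intro x hx
    have : max (|x| - L) 0 = 0 := max_eq_right (by linarith)
    simp [swPsi, this, sw_cosh_t0]
  have hψL : swPsi lam L L = lam / Real.sqrt 2 := hval_in L (by rw [abs_of_pos hL0])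
  -- evenness
  have heven : ∀ x : ℝ, swPsi lam L (-x) = swPsi lam L x := by
    intro x; simp [swPsi, abs_neg]
  -- positivity
  have hpos : ∀ x : ℝ, 0 < swPsi lam L x := fun x => div_pos hlam0 (Real.cosh_pos _)
  -- concentration
  have hconc : ∀ x : ℝ, swPsi lam L x ≤ swPsi lam L L := by
    intro x
    rw [hψL, swPsi, ← sw_cosh_t0]
    refine div_le_div_of_nonneg_left hlam0.le (Real.cosh_pos _) ?_
    rw [Real.cosh_le_cosh]
    have h1 : 0 ≤ lam * max (|x| - L) 0 :=
      mul_nonneg hlam0.le (le_max_right _ _)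
    rw [abs_of_nonneg sw_t0_nonneg, abs_of_nonneg (by linarith [sw_t0_nonneg])]
    linarith
  refine ⟨swPsi lam L, swPsi' lam L, ⟨?_, ?_, ?_, ?_, ?_⟩, heven, hpos, (heven L).symm, hconc⟩
  · -- continuity
    refine continuous_const.div ?_ (fun x => (Real.cosh_pos _).ne')
    exact Real.continuous_cosh.comp (by fun_prop)
  · exact sw_tendsto_aux hlam0 tendsto_abs_atTop_atTop
  · exact sw_tendsto_aux hlam0 tendsto_abs_atBot_atTop
  · -- derivatives away from ±L
    intro x hxL hxnL
    rcases lt_trichotomy x (-L) with hx | hx | hx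
    · -- x < -L
      have hmem : Iio (-L) ∈ 𝓝 x := Iio_mem_nhds hx
      have heq1 : swPsi lam L =ᶠ[𝓝 x] fun y => lam / Real.cosh (-lam * (y - -L) + swT0) := by
        filter_upwards [hmem] with y hy
        have hy' : y < -L := hy
        have h1 : |y| = -y := abs_of_neg (by linarith)
        have h2 : max (|y| - L) 0 = -y - L := by rw [h1]; exact max_eq_left (by linarith)
        simp only [swPsi, h2]
        ring_nf
      have heq2 : swPsi' lam L =ᶠ[𝓝 x]
          fun y => lam ^ 2 * Real.sinh (-lam * (y - -L) + swT0)
            / Real.cosh (-lam * (y - -L) + swT0) ^ 2 := by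
        filter_upwards [hmem] with y hy
        have hy' : y < -L := hy
        have h3 : lam * (-y - L) = -lam * (y - -L) := by ring
        simp only [swPsi', if_pos hy'.le, h3]
      have hu : lam * (-x - L) = -lam * (x - -L) := by ring
      constructor
      · have := (sw_hasDerivAt_aux lam (-lam) (-L) swT0 x).congr_of_eventuallyEq heq1
        refine this.congr_deriv ?_
        simp only [swPsi', if_pos hx.le, hu]
        ring
      · have := (sw_hasDerivAt_aux2 (lam ^ 2) (-lam) (-L) swT0 x).congr_of_eventuallyEq heq2
        refine this.congr_deriv ?_
        have hψx : swPsi lam L x = lam / Real.cosh (-lam * (x - -L) + swT0) := by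
          have h1 : |x| = -x := abs_of_neg (by linarith)
          have h2 : max (|x| - L) 0 = -x - L := by rw [h1]; exact max_eq_left (by linarith)
          simp only [swPsi, h2, hu]
        rw [hψx, sw_ode_id lam _ _ (Real.cosh_pos _).ne' (Real.cosh_sq _)]
        ring
    · exact absurd hx hxnL
    · rcases lt_trichotomy x L with hx2 | hx2 | hx2
      · -- -L < x < L
        have hmem : Ioo (-L) L ∈ 𝓝 x := Ioo_mem_nhds hx hx2
        have heq1 : swPsi lam L =ᶠ[𝓝 x] fun _ => lam / Real.sqrt 2 := by
          filter_upwards [hmem] with y hy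
          exact hval_in y (abs_le.mpr ⟨hy.1.le, hy.2.le⟩)
        have heq2 : swPsi' lam L =ᶠ[𝓝 x] fun _ => (0:ℝ) := by
          filter_upwards [hmem] with y hy
          simp only [swPsi', if_neg (not_le.mpr hy.1), if_pos hy.2]
        have hψ'x : swPsi' lam L x = 0 := by
          simp only [swPsi', if_neg (not_le.mpr hx), if_pos hx2]
        constructor
        · rw [hψ'x]
          exact (hasDerivAt_const x _).congr_of_eventuallyEq heq1
        · have hψx : swPsi lam L x = lam / Real.sqrt 2 :=
            hval_in x (abs_le.mpr ⟨hx.le, hx2.le⟩)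
          have hzero : lam ^ 2 * swPsi lam L x - 2 * swPsi lam L x ^ 3 = 0 := by
            rw [hψx]
            have hs0 : Real.sqrt 2 ≠ 0 := hs2.ne'
            field_simp
            linear_combination lam ^ 3 * hssq
          rw [hzero]
          exact (hasDerivAt_const x _).congr_of_eventuallyEq heq2
      · exact absurd hx2 hxL
      · -- x > L
        have hmem : Ioi L ∈ 𝓝 x := Ioi_mem_nhds hx2
        have heq1 : swPsi lam L =ᶠ[𝓝 x] fun y => lam / Real.cosh (lam * (y - L) + swT0) := by
          filter_upwards [hmem] with y hy
          have hy' : L < y := hy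
          have h1 : |y| = y := abs_of_pos (by linarith)
          have h2 : max (|y| - L) 0 = y - L := by rw [h1]; exact max_eq_left (by linarith)
          simp only [swPsi, h2]
        have heq2 : swPsi' lam L =ᶠ[𝓝 x]
            fun y => -lam ^ 2 * Real.sinh (lam * (y - L) + swT0)
              / Real.cosh (lam * (y - L) + swT0) ^ 2 := by
          filter_upwards [hmem] with y hy
          have hy' : L < y := hy
          simp only [swPsi', if_neg (by push_neg; linarith : ¬ y ≤ -L),
            if_neg (not_lt.mpr hy'.le)]
        constructor
        · have := (sw_hasDerivAt_aux lam lam L swT0 x).congr_of_eventuallyEq heq1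
          refine this.congr_deriv ?_
          simp only [swPsi', if_neg (by push_neg; linarith : ¬ x ≤ -L),
            if_neg (not_lt.mpr hx2.le)]
          ring
        · have := (sw_hasDerivAt_aux2 (-lam ^ 2) lam L swT0 x).congr_of_eventuallyEq heq2
          refine this.congr_deriv ?_
          have hψx : swPsi lam L x = lam / Real.cosh (lam * (x - L) + swT0) := by
            have h1 : |x| = x := abs_of_pos (by linarith)
            have h2 : max (|x| - L) 0 = x - L := by rw [h1]; exact max_eq_left (by linarith)
            simp only [swPsi, h2]
          rw [hψx, sw_ode_id lam _ _ (Real.cosh_pos _).ne' (Real.cosh_sq _)]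
          ring
  · -- jump conditions
    have hjump : lam ^ 2 / 2 = ε * (lam / Real.sqrt 2) := by
      have hs0 : Real.sqrt 2 ≠ 0 := hs2.ne'
      rw [hlam]; field_simp; linear_combination hssq
    intro x hx
    rcases hx with hx | hx
    · -- x = L
      rw [hx]
      refine ⟨-lam ^ 2 / 2, 0, ?_, ?_, ?_⟩
      · -- limit from the right
        have hcont : Tendsto
            (fun y => -lam ^ 2 * Real.sinh (lam * (y - L) + swT0)
              / Real.cosh (lam * (y - L) + swT0) ^ 2) (𝓝[>] L) (𝓝 (-lam ^ 2 / 2)) := by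
          have h1 : ContinuousAt (fun y => -lam ^ 2 * Real.sinh (lam * (y - L) + swT0)
              / Real.cosh (lam * (y - L) + swT0) ^ 2) L := by
            apply ContinuousAt.div
            · fun_prop
            · fun_prop
            · positivity
          have h2 := h1.continuousWithinAt (s := Ioi L)
          have h3 : -lam ^ 2 * Real.sinh (lam * (L - L) + swT0)
              / Real.cosh (lam * (L - L) + swT0) ^ 2 = -lam ^ 2 / 2 := by
            rw [show lam * (L - L) + swT0 = swT0 by ring, sw_sinh_t0, sw_cosh_t0]
            rw [hssq]; ring
          rw [ContinuousWithinAt, h3] at h2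
          exact h2
        refine hcont.congr' ?_
        filter_upwards [self_mem_nhdsWithin] with y hy
        have hy' : L < y := hy
        simp only [swPsi', if_neg (by push_neg; linarith : ¬ y ≤ -L),
          if_neg (not_lt.mpr hy'.le)]
      · -- limit from the left
        have hmem : Ioo (-L) L ∈ 𝓝[<] L :=
          Ioo_mem_nhdsLT_of_mem ⟨by linarith, le_refl L⟩
        refine (tendsto_const_nhds (x := (0:ℝ))).congr' ?_
        filter_upwards [hmem] with y hy
        simp only [swPsi', if_neg (not_le.mpr hy.1), if_pos hy.2]
      · rw [hψL]; linarith [hjump]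
    · -- x = -L
      rw [hx]
      refine ⟨0, lam ^ 2 / 2, ?_, ?_, ?_⟩
      · have hmem : Ioo (-L) L ∈ 𝓝[>] (-L) :=
          Ioo_mem_nhdsGT_of_mem ⟨le_refl _, by linarith⟩
        refine (tendsto_const_nhds (x := (0:ℝ))).congr' ?_
        filter_upwards [hmem] with y hy
        simp only [swPsi', if_neg (not_le.mpr hy.1), if_pos hy.2]
      · have hcont : Tendsto
            (fun y => lam ^ 2 * Real.sinh (lam * (-y - L) + swT0)
              / Real.cosh (lam * (-y - L) + swT0) ^ 2) (𝓝[<] (-L)) (𝓝 (lam ^ 2 / 2)) := by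
          have h1 : ContinuousAt (fun y => lam ^ 2 * Real.sinh (lam * (-y - L) + swT0)
              / Real.cosh (lam * (-y - L) + swT0) ^ 2) (-L) := by
            apply ContinuousAt.div
            · fun_prop
            · fun_prop
            · positivity
          have h2 := h1.continuousWithinAt (s := Iio (-L))
          have h3 : lam ^ 2 * Real.sinh (lam * (-(-L) - L) + swT0)
              / Real.cosh (lam * (-(-L) - L) + swT0) ^ 2 = lam ^ 2 / 2 := by
            rw [show lam * (-(-L) - L) + swT0 = swT0 by ring, sw_sinh_t0, sw_cosh_t0]
            rw [hssq]; ring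
          rw [ContinuousWithinAt, h3] at h2
          exact h2
        refine hcont.congr' ?_
        filter_upwards [self_mem_nhdsWithin] with y hy
        have hy' : y < -L := hy
        simp only [swPsi', if_pos hy'.le]
      · have h4 : swPsi lam L (-L) = lam / Real.sqrt 2 := by rw [heven L, hψL]
        rw [h4]; linarith [hjump]
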